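/- Let P be a finite cyclic group and let 0 → A → B → C → 0 be a short exact sequence of P-modules. If the Herbrand quotients h_P(A) and h_P(C) are defined (i.e., H^1 and H^2 of P with these coefficients are finite), then h_P(B) is defined and h_P(B) = h_P(A) · h_P(C). -/

import Mathlib

noncomputable section
namespace HQ

open groupCohomology Finset
open scoped Classical

variable {P : Type} [Group P] [Fintype P] {M : Type} [AddCommGroup M]

/-- canonical exponent -/
def expo (σ : P) (hσ : ∀ x : P, ∃ i : ℕ, σ ^ i = x) (x : P) : ℕ := Nat.find (hσ x)

variable {σ : P} (hσ : ∀ x : P, ∃ i : ℕ, σ ^ i = x)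
include hσ

lemma pow_expo (x : P) : σ ^ (expo σ hσ x) = x := Nat.find_spec (hσ x)

lemma expo_lt (x : P) : expo σ hσ x < orderOf σ := by
  have h0 : 0 < orderOf σ := orderOf_pos σ
  by_contra h
  push_neg at h
  have h2 : σ ^ (expo σ hσ x % orderOf σ) = x := by
    rw [pow_mod_orderOf]; exact pow_expo hσ x
  have h3 : expo σ hσ x ≤ expo σ hσ x % orderOf σ := Nat.find_le h2
  have h4 : expo σ hσ x % orderOf σ < orderOf σ := Nat.mod_lt _ h0
  omega

lemma expo_one : expo σ hσ 1 = 0 :=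
  Nat.le_zero.mp (Nat.find_le (pow_zero σ))

lemma orderOf_gen_eq_card : orderOf σ = Fintype.card P := by
  rw [← Nat.card_eq_fintype_card]
  exact orderOf_eq_card_of_forall_mem_zpowers (fun x => by
    obtain ⟨i, hi⟩ := hσ x; exact ⟨(i : ℤ), by simpa using hi⟩)

lemma bij_pow : Function.Bijective (fun i : Fin (orderOf σ) => σ ^ (i : ℕ)) := by
  rw [Fintype.bijective_iff_surjective_and_card]
  refine ⟨fun x => ⟨⟨expo σ hσ x, expo_lt hσ x⟩, pow_expo hσ x⟩, ?_⟩
  simp [orderOf_gen_eq_card hσ]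

/-- summing over powers of the generator is summing over the group -/
lemma sum_pow_eq (F : P → M) :
    ∑ i ∈ range (orderOf σ), F (σ ^ i) = ∑ s : P, F s := by
  rw [← Fin.sum_univ_eq_sum_range (fun i => F (σ ^ i)) (orderOf σ)]
  exact Fintype.sum_bijective _ (bij_pow hσ) _ _ (fun i => rfl)

lemma expo_congr {i : ℕ} (x : P) (h : σ ^ i = x) :
    i % orderOf σ = expo σ hσ x % orderOf σ := by
  rw [← pow_expo hσ x] at h
  exact pow_eq_pow_iff_modEq.mp h

omit hσ



/-- the endomorphism `ρ σ - 1` -/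
def tEnd (σ : P) (ρ : Representation ℤ P M) : M →ₗ[ℤ] M := (ρ σ : M →ₗ[ℤ] M) - LinearMap.id

/-- the norm endomorphism -/
def nEnd (ρ : Representation ℤ P M) : M →ₗ[ℤ] M := ∑ s : P, (ρ s : M →ₗ[ℤ] M)

variable (ρ : Representation ℤ P M)

lemma tEnd_apply (x : M) : tEnd σ ρ x = ρ σ x - x := rfl

lemma nEnd_apply (x : M) : nEnd ρ x = ∑ s : P, ρ s x := by
  simp [nEnd, LinearMap.sum_apply]

lemma rho_rho (s t : P) (x : M) : ρ s (ρ t x) = ρ (s * t) x := by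
  rw [map_mul]; rfl

lemma nEnd_rho (s : P) (x : M) : nEnd ρ (ρ s x) = nEnd ρ x := by
  rw [nEnd_apply, nEnd_apply]
  simp only [rho_rho]
  exact Fintype.sum_bijective (· * s) (Group.mulRight_bijective s)
    (fun t => ρ (t * s) x) (fun t => ρ t x) (fun t => rfl)

lemma rho_nEnd (s : P) (x : M) : ρ s (nEnd ρ x) = nEnd ρ x := by
  rw [nEnd_apply, map_sum]
  simp only [rho_rho]
  exact Fintype.sum_bijective (s * ·) (Group.mulLeft_bijective s)
    (fun t => ρ (s * t) x) (fun t => ρ t x) (fun t => rfl)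

lemma nEnd_tEnd (x : M) : nEnd ρ (tEnd σ ρ x) = 0 := by
  rw [tEnd_apply, map_sub, nEnd_rho, sub_self]

lemma tEnd_nEnd (x : M) : tEnd σ ρ (nEnd ρ x) = 0 := by
  rw [tEnd_apply, rho_nEnd, sub_self]

/-- partial sums `∑_{i<m} ρ(σ^i) a` -/
def psum (σ : P) (ρ : Representation ℤ P M) (a : M) (m : ℕ) : M := ∑ i ∈ range m, ρ (σ ^ i) a

lemma psum_succ (a : M) (m : ℕ) : psum σ ρ a (m + 1) = psum σ ρ a m + ρ (σ ^ m) a := by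
  simp [psum, Finset.sum_range_succ]

lemma psum_zero (a : M) : psum σ ρ a 0 = 0 := by simp [psum]

lemma psum_one (a : M) : psum σ ρ a 1 = a := by simp [psum]

include hσ in
lemma psum_orderOf (a : M) : psum σ ρ a (orderOf σ) = nEnd ρ a := by
  rw [psum, sum_pow_eq hσ (fun s => ρ s a), nEnd_apply]

lemma psum_add (a : M) (m j : ℕ) :
    psum σ ρ a (m + j) = psum σ ρ a m + ρ (σ ^ m) (psum σ ρ a j) := by
  induction j with
  | zero => simp [psum_zero]
  | succ j ih => rw [← Nat.add_assoc, psum_succ, ih, psum_succ, map_add, add_assoc,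
      rho_rho, ← pow_add]

include hσ in
lemma psum_mod (a : M) (ha : nEnd ρ a = 0) (m : ℕ) :
    psum σ ρ a m = psum σ ρ a (m % orderOf σ) := by
  have key : ∀ q : ℕ, psum σ ρ a (orderOf σ * q) = 0 := by
    intro q
    induction q with
    | zero => simp [psum_zero]
    | succ q ih => rw [Nat.mul_succ, psum_add, ih, psum_orderOf hσ _ a, ha, map_zero, add_zero]
  conv_lhs => rw [← Nat.div_add_mod m (orderOf σ), Nat.add_comm]
  rw [psum_add, key, map_zero, add_zero]

end HQ
namespace HQ
open groupCohomology Finset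
open scoped Classical

variable {P : Type} [Group P] [Fintype P] {M : Type} [AddCommGroup M]

/-- first Tate cohomology `ker N / im T` as an additive quotient group -/
def q1 (σ : P) (ρ : Representation ℤ P M) : Type :=
  (nEnd ρ).toAddMonoidHom.ker ⧸
    ((tEnd σ ρ).toAddMonoidHom.range.addSubgroupOf (nEnd ρ).toAddMonoidHom.ker)

/-- zeroth Tate cohomology `ker T / im N` as an additive quotient group -/
def q0 (σ : P) (ρ : Representation ℤ P M) : Type :=
  (tEnd σ ρ).toAddMonoidHom.ker ⧸
    ((nEnd ρ).toAddMonoidHom.range.addSubgroupOf (tEnd σ ρ).toAddMonoidHom.ker)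

instance (σ : P) (ρ : Representation ℤ P M) : AddCommGroup (q1 σ ρ) :=
  inferInstanceAs (AddCommGroup (_ ⧸ _))

instance (σ : P) (ρ : Representation ℤ P M) : AddCommGroup (q0 σ ρ) :=
  inferInstanceAs (AddCommGroup (_ ⧸ _))

variable {σ : P} (hσ : ∀ x : P, ∃ i : ℕ, σ ^ i = x) (ρ : Representation ℤ P M)

lemma repOf_rho_apply (s : P) (x : M) : (Rep.of ρ).ρ s x = ρ s x := rfl

abbrev oneCocycles (A : Rep ℤ P) := cocycles₁ A
abbrev twoCocycles (A : Rep ℤ P) := cocycles₂ A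
abbrev oneCoboundaries (A : Rep ℤ P) : Submodule ℤ (cocycles₁ A) :=
  AddSubgroup.toIntSubmodule (AddSubgroup.comap (cocycles₁ A).subtype.toAddMonoidHom
    (coboundaries₁ A).toAddSubgroup)
abbrev twoCoboundaries (A : Rep ℤ P) : Submodule ℤ (cocycles₂ A) :=
  AddSubgroup.toIntSubmodule (AddSubgroup.comap (cocycles₂ A).subtype.toAddMonoidHom
    (coboundaries₂ A).toAddSubgroup)
def dOne (A : Rep ℤ P) : (P → A) →ₗ[ℤ] (P × P → A) := (d₁₂ A).hom

lemma oneCocycles_map_one {A : Rep ℤ P} (u : oneCocycles A) : u 1 = 0 := cocycles₁_map_one u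

lemma mem_oneCocycles_iff {A : Rep ℤ P} (f : P → A) :
    f ∈ oneCocycles A ↔ ∀ g h : P, f (g * h) = A.ρ g (f h) + f g := mem_cocycles₁_iff f

lemma mem_twoCocycles_def {A : Rep ℤ P} (f : P × P → A) :
    f ∈ twoCocycles A ↔ ∀ g h j : P,
      A.ρ g (f (h, j)) - f (g * h, j) + f (g, h * j) - f (g, h) = 0 := mem_cocycles₂_def f

lemma mem_oneCoboundaries_iff {A : Rep ℤ P} (u : oneCocycles A) :
    u ∈ oneCoboundaries A ↔ ∃ x : A, ∀ g : P, A.ρ g x - x = u g := by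
  have e : u ∈ oneCoboundaries A ↔ ∃ x, (d₀₁ A).hom x = (u : P → A) := Iff.rfl
  rw [e]
  constructor
  · rintro ⟨x, hx⟩; exact ⟨x, fun g => congrFun hx g⟩
  · rintro ⟨x, hx⟩; exact ⟨x, funext hx⟩

lemma mem_twoCoboundaries_iff {A : Rep ℤ P} (u : twoCocycles A) :
    u ∈ twoCoboundaries A ↔
      ∃ x : P → A, ∀ g h : P, A.ρ g (x h) - x (g * h) + x g = u (g, h) := by
  have e : u ∈ twoCoboundaries A ↔ ∃ x, (d₁₂ A).hom x = (u : P × P → A) := Iff.rfl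
  rw [e]
  constructor
  · rintro ⟨x, hx⟩; exact ⟨x, fun g h => congrFun hx (g, h)⟩
  · rintro ⟨x, hx⟩; exact ⟨x, funext fun p => hx p.1 p.2⟩

lemma mem_range_of_mem_twoCoboundaries {A : Rep ℤ P} {u : twoCocycles A}
    (h : u ∈ twoCoboundaries A) : (u : P × P → A) ∈ LinearMap.range (dOne A) := by
  have e : ∃ x, (d₁₂ A).hom x = (u : P × P → A) := h
  obtain ⟨x, hx⟩ := e
  exact ⟨x, hx⟩

/-- the concrete quotient `Z¹ / B¹` is `H¹` -/
def quotEquivH1 (A : Rep ℤ P) : (oneCocycles A ⧸ oneCoboundaries A) ≃ groupCohomology A 1 :=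
  Equiv.ofBijective (Quotient.lift (fun u => H1π A u) (fun a b h =>
    (H1π_eq_iff a b).mpr (by
      have := (Submodule.quotientRel_def (oneCoboundaries A)).mp h; exact this))) ⟨by
      intro x y
      induction x using Quotient.inductionOn with | h u =>
      induction y using Quotient.inductionOn with | h v =>
      intro h
      exact Quotient.sound ((Submodule.quotientRel_def (oneCoboundaries A)).mpr (by
        have := (H1π_eq_iff _ _).mp h; exact this)), by
      intro x
      induction x using H1_induction_on with | h u =>
      exact ⟨Submodule.Quotient.mk u, rfl⟩⟩

/-- the concrete quotient `Z² / B²` is `H²` -/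
def quotEquivH2 (A : Rep ℤ P) : (twoCocycles A ⧸ twoCoboundaries A) ≃ groupCohomology A 2 :=
  Equiv.ofBijective (Quotient.lift (fun u => H2π A u) (fun a b h =>
    (H2π_eq_iff a b).mpr (by
      have := (Submodule.quotientRel_def (twoCoboundaries A)).mp h; exact this))) ⟨by
      intro x y
      induction x using Quotient.inductionOn with | h u =>
      induction y using Quotient.inductionOn with | h v =>
      intro h
      exact Quotient.sound ((Submodule.quotientRel_def (twoCoboundaries A)).mpr (by
        have := (H2π_eq_iff _ _).mp h; exact this)), by
      intro x
      induction x using H2_induction_on with | h u =>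
      exact ⟨Submodule.Quotient.mk u, rfl⟩⟩

lemma oneCocycles_pow (u : oneCocycles (Rep.of ρ)) (m : ℕ) :
    u (σ ^ m) = psum σ ρ (u σ) m := by
  induction m with
  | zero => rw [pow_zero, psum_zero]; exact oneCocycles_map_one u
  | succ m ih =>
      rw [pow_succ, (mem_oneCocycles_iff (A := Rep.of ρ) u).mp u.2 (σ ^ m) σ, ih, psum_succ,
        repOf_rho_apply, add_comm]

include hσ

lemma oneCocycles_sigma_mem_ker (u : oneCocycles (Rep.of ρ)) :
    nEnd ρ (u σ) = 0 := by
  have h := oneCocycles_pow (σ := σ) ρ u (orderOf σ)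
  rw [pow_orderOf_eq_one, psum_orderOf hσ] at h
  rw [← h]; exact oneCocycles_map_one u

lemma oneCocycles_eq_zero_of_sigma (u : oneCocycles (Rep.of ρ)) (h : u σ = 0) :
    u = 0 := by
  have : ∀ x, u x = 0 := by
    intro x
    have hx := oneCocycles_pow (σ := σ) ρ u (expo σ hσ x)
    rw [pow_expo hσ x] at hx
    rw [hx, h]
    simp [psum]
  exact Subtype.ext (funext this)

lemma oneCocycles_ext_sigma (v w : oneCocycles (Rep.of ρ)) (hvw : v σ = w σ) : v = w := by
  have h2 : (v - w : oneCocycles (Rep.of ρ)) σ = 0 := by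
    have hc : ((v - w : oneCocycles (Rep.of ρ)) : P → M) = (v : P → M) - (w : P → M) := rfl
    show ((v - w : oneCocycles (Rep.of ρ)) : P → M) σ = 0
    rw [hc, Pi.sub_apply]
    show v σ - w σ = 0
    rw [hvw, sub_self]
  have h3 := oneCocycles_eq_zero_of_sigma hσ ρ (v - w) h2
  rwa [sub_eq_zero] at h3

/-- the evaluation-at-`σ` equivalence between 1-cocycles and `ker N` -/
def cocyOne : oneCocycles (Rep.of ρ) ≃ (nEnd ρ).toAddMonoidHom.ker where
  toFun u := ⟨u σ, oneCocycles_sigma_mem_ker hσ ρ u⟩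
  invFun a := ⟨fun x => psum σ ρ a.1 (expo σ hσ x), by
    rw [mem_oneCocycles_iff]
    intro g h
    have hmod : (expo σ hσ g + expo σ hσ h) % orderOf σ = expo σ hσ (g * h) % orderOf σ :=
      expo_congr hσ (g * h) (by rw [pow_add, pow_expo hσ g, pow_expo hσ h])
    have ha : nEnd ρ a.1 = 0 := a.2
    rw [repOf_rho_apply]
    have hadd := psum_add (σ := σ) ρ a.1 (expo σ hσ g) (expo σ hσ h)
    rw [pow_expo hσ g] at hadd
    conv_lhs => rw [psum_mod hσ ρ _ ha (expo σ hσ (g * h)), ← hmod,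
      ← psum_mod hσ ρ _ ha (expo σ hσ g + expo σ hσ h)]
    rw [hadd, add_comm]⟩
  left_inv u := by
    apply oneCocycles_ext_sigma hσ ρ
    show psum σ ρ (u σ) (expo σ hσ σ) = u σ
    rw [← oneCocycles_pow (σ := σ) ρ u (expo σ hσ σ), pow_expo hσ σ]
  right_inv a := by
    ext
    show psum σ ρ a.1 (expo σ hσ σ) = a.1
    have ha : nEnd ρ a.1 = 0 := a.2
    have h1 : σ ^ (1 : ℕ) = σ := pow_one σ
    rw [psum_mod hσ ρ _ ha, ← expo_congr hσ σ h1, ← psum_mod hσ ρ _ ha, psum_one]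

lemma cocyOne_coboundary (u : oneCocycles (Rep.of ρ)) :
    u ∈ oneCoboundaries (Rep.of ρ) ↔
      (u : P → M) σ ∈ (tEnd σ ρ).toAddMonoidHom.range := by
  rw [mem_oneCoboundaries_iff]
  constructor
  · rintro ⟨x, hx⟩
    exact ⟨x, hx σ⟩
  · rintro ⟨x, hx⟩
    refine ⟨x, fun g => ?_⟩
    set b : oneCocycles (Rep.of ρ) :=
      ⟨fun g => ρ g x - x, by
        rw [mem_oneCocycles_iff]
        intro s t
        simp only [repOf_rho_apply, map_sub, rho_rho]
        abel⟩ with hb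
    have hub : u = b := by
      apply oneCocycles_ext_sigma hσ ρ
      show u σ = ρ σ x - x
      rw [← hx]; rfl
    rw [hub]; rfl

end HQ
namespace HQ
open groupCohomology Finset
open scoped Classical

variable {P : Type} [Group P] [Fintype P] {M : Type} [AddCommGroup M]
variable {σ : P} (hσ : ∀ x : P, ∃ i : ℕ, σ ^ i = x) (ρ : Representation ℤ P M)

include hσ in
lemma H1_equiv_q1 : Nonempty (groupCohomology (Rep.of ρ) 1 ≃ q1 σ ρ) := by
  have e2 : oneCocycles (Rep.of ρ) ⧸ oneCoboundaries (Rep.of ρ) ≃ q1 σ ρ := by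
    refine Quotient.congr (cocyOne hσ ρ) ?_
    intro a b
    rw [Submodule.quotientRel_def, QuotientAddGroup.leftRel_apply,
      AddSubgroup.mem_addSubgroupOf]
    have hval : (((-(cocyOne hσ ρ) a + (cocyOne hσ ρ) b :
        (nEnd ρ).toAddMonoidHom.ker)) : M) = -(a σ) + b σ := rfl
    rw [hval, cocyOne_coboundary hσ ρ (a - b)]
    have hsub : ((a - b : oneCocycles (Rep.of ρ)) : P → M) σ = a σ - b σ := rfl
    rw [hsub]
    constructor
    · intro h
      have h2 : -(a σ) + b σ = -(a σ - b σ) := by abel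
      rw [h2]; exact neg_mem h
    · intro h
      have h2 : a σ - b σ = -(-(a σ) + b σ) := by abel
      rw [h2]; exact neg_mem h
  exact ⟨(quotEquivH1 (Rep.of ρ)).symm.trans e2⟩

include hσ in
lemma card_H1_eq : Nat.card (groupCohomology (Rep.of ρ) 1) = Nat.card (q1 σ ρ) :=
  Nat.card_congr (H1_equiv_q1 hσ ρ).some

end HQ
namespace HQ
open groupCohomology Finset
open scoped Classical

variable {P : Type} [Group P] [Fintype P] {M : Type} [AddCommGroup M]
variable {σ : P} (hσ : ∀ x : P, ∃ i : ℕ, σ ^ i = x) (ρ : Representation ℤ P M)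

/-- the transgression-type map sending a 2-cochain to `∑_s u(s, σ)` -/
def psi (σ : P) (ρ : Representation ℤ P M) (u : P × P → M) : M := ∑ s : P, u (s, σ)

lemma psi_sub (u v : P × P → M) : psi σ ρ (u - v) = psi σ ρ u - psi σ ρ v := by
  simp [psi, Finset.sum_sub_distrib]

lemma twoCocycles_identity (v : P × P → M) (hv : v ∈ twoCocycles (Rep.of ρ)) (g h j : P) :
    ρ g (v (h, j)) - v (g * h, j) + v (g, h * j) - v (g, h) = 0 :=
  (mem_twoCocycles_def (A := Rep.of ρ) v).mp hv g h j

lemma twoCocycles_snd_one (v : P × P → M) (hv : v ∈ twoCocycles (Rep.of ρ)) (g : P) :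
    v (g, 1) = ρ g (v (1, 1)) := by
  have h := twoCocycles_identity ρ v hv g 1 1
  rw [mul_one, one_mul] at h
  have h2 : ρ g (v (1, 1)) - v (g, 1) = 0 := by
    rw [show ρ g (v (1, 1)) - v (g, 1) =
      ρ g (v (1, 1)) - v (g, 1) + v (g, 1) - v (g, 1) from by abel]
    exact h
  rw [eq_comm]
  exact sub_eq_zero.mp h2

lemma psi_mem_ker (v : P × P → M) (hv : v ∈ twoCocycles (Rep.of ρ)) :
    tEnd σ ρ (psi σ ρ v) = 0 := by
  rw [tEnd_apply, sub_eq_zero, psi, map_sum]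
  have key : ∀ s : P, ρ σ (v (s, σ)) = v (σ * s, σ) - v (σ, s * σ) + v (σ, s) := by
    intro s
    have h := twoCocycles_identity ρ v hv σ s σ
    have h2 : ρ σ (v (s, σ)) - (v (σ * s, σ) - v (σ, s * σ) + v (σ, s)) = 0 := by
      rw [show ρ σ (v (s, σ)) - (v (σ * s, σ) - v (σ, s * σ) + v (σ, s)) =
        ρ σ (v (s, σ)) - v (σ * s, σ) + v (σ, s * σ) - v (σ, s) from by abel]
      exact h
    exact sub_eq_zero.mp h2
  rw [Finset.sum_congr rfl (fun s _ => key s), Finset.sum_add_distrib,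
    Finset.sum_sub_distrib]
  have e1 : ∑ s : P, v (σ * s, σ) = ∑ s : P, v (s, σ) :=
    Fintype.sum_bijective (σ * ·) (Group.mulLeft_bijective σ)
      (fun s => v (σ * s, σ)) (fun s => v (s, σ)) (fun s => rfl)
  have e2 : ∑ s : P, v (σ, s * σ) = ∑ s : P, v (σ, s) :=
    Fintype.sum_bijective (· * σ) (Group.mulRight_bijective σ)
      (fun s => v (σ, s * σ)) (fun s => v (σ, s)) (fun s => rfl)
  rw [e1, e2]
  abel

lemma psi_dOne (c : P → M) :
    psi σ ρ (dOne (Rep.of ρ) c) = nEnd ρ (c σ) := by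
  have hterm : ∀ s : P, dOne (Rep.of ρ) c (s, σ) = ρ s (c σ) - c (s * σ) + c s :=
    fun s => rfl
  rw [psi, Finset.sum_congr rfl (fun s _ => hterm s), Finset.sum_add_distrib,
    Finset.sum_sub_distrib]
  have e2 : ∑ s : P, c (s * σ) = ∑ s : P, c s :=
    Fintype.sum_bijective (· * σ) (Group.mulRight_bijective σ)
      (fun s => c (s * σ)) (fun s => c s) (fun s => rfl)
  rw [e2, nEnd_apply]
  exact sub_add_cancel _ _

include hσ

lemma rho_invariant {a : M} (ha : tEnd σ ρ a = 0) (s : P) : ρ s a = a := by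
  rw [tEnd_apply, sub_eq_zero] at ha
  obtain ⟨i, rfl⟩ := hσ s
  induction i with
  | zero => simp
  | succ i ih => rw [pow_succ, ← rho_rho, ha, ih]

lemma expo_pow_lt {i : ℕ} (hi : i < orderOf σ) : expo σ hσ (σ ^ i) = i := by
  have h := expo_congr hσ (σ ^ i) rfl
  rw [Nat.mod_eq_of_lt hi, Nat.mod_eq_of_lt (expo_lt hσ _)] at h
  omega

lemma expo_mul_mod (g h : P) :
    (expo σ hσ g + expo σ hσ h) % orderOf σ = expo σ hσ (g * h) := by
  rw [expo_congr hσ (g * h) (by rw [pow_add, pow_expo hσ g, pow_expo hσ h]),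
    Nat.mod_eq_of_lt (expo_lt hσ _)]

/-- the carry 2-cocycle attached to an invariant element -/
lemma carry_cocycle {a : M} (ha : tEnd σ ρ a = 0) :
    (fun p : P × P => ((expo σ hσ p.1 + expo σ hσ p.2) / orderOf σ) • a) ∈
      twoCocycles (Rep.of ρ) := by
  rw [mem_twoCocycles_def]
  intro g h j
  have hn : 0 < orderOf σ := orderOf_pos σ
  set n := orderOf σ with hndef
  set eg := expo σ hσ g
  set eh := expo σ hσ h
  set ej := expo σ hσ j
  have hcarry : ∀ x y : P, expo σ hσ x + expo σ hσ y =
      n * ((expo σ hσ x + expo σ hσ y) / n) + expo σ hσ (x * y) := by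
    intro x y
    conv_lhs => rw [← Nat.div_add_mod (expo σ hσ x + expo σ hσ y) n]
    rw [expo_mul_mod hσ]
  have h1 := hcarry h j
  have h2 := hcarry g h
  have h3 : (eg + eh + ej) / n = (eg + eh) / n + (expo σ hσ (g * h) + ej) / n := by
    conv_lhs => rw [h2, add_assoc, Nat.mul_add_div hn]
  have h4 : (eg + eh + ej) / n = (eh + ej) / n + (eg + expo σ hσ (h * j)) / n := by
    have hr : eg + eh + ej = n * ((eh + ej) / n) + (eg + expo σ hσ (h * j)) := by
      conv_lhs => rw [add_assoc, h1]
      ring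
    conv_lhs => rw [hr, Nat.mul_add_div hn]
  have key : (eh + ej) / n + (eg + expo σ hσ (h * j)) / n =
      (eg + eh) / n + (expo σ hσ (g * h) + ej) / n := h4.symm.trans h3
  set k1 := (eh + ej) / n
  set k2 := (expo σ hσ (g * h) + ej) / n
  set k3 := (eg + expo σ hσ (h * j)) / n
  set k4 := (eg + eh) / n
  show ρ g (k1 • a) - k2 • a + k3 • a - k4 • a = 0
  rw [map_nsmul, rho_invariant hσ ρ ha g]
  have hz : (k1 : ℤ) - k2 + k3 - k4 = 0 := by omega
  calc k1 • a - k2 • a + k3 • a - k4 • a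
      = ((k1 : ℤ) - k2 + k3 - k4) • a := by
        rw [sub_smul, add_smul, sub_smul, natCast_zsmul, natCast_zsmul, natCast_zsmul,
          natCast_zsmul]
    _ = 0 := by rw [hz, zero_smul]

omit hσ

/-- partial sums of `i ↦ v (σ^i, σ)` -/
def csum (σ : P) (v : P × P → M) (m : ℕ) : M := ∑ i ∈ range m, v (σ ^ i, σ)

lemma csum_succ (v : P × P → M) (m : ℕ) :
    csum σ v (m + 1) = csum σ v m + v (σ ^ m, σ) := by
  simp [csum, Finset.sum_range_succ]

lemma csum_add (v : P × P → M) (m j : ℕ) :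
    csum σ v (m + j) = csum σ v m + ∑ i ∈ range j, v (σ ^ m * σ ^ i, σ) := by
  rw [csum, Finset.sum_range_add, csum]
  congr 1
  exact Finset.sum_congr rfl fun i _ => by rw [← pow_add]

include hσ

lemma csum_step (v : P × P → M) (hu : psi σ ρ v = 0) (m : ℕ) :
    csum σ v (m + orderOf σ) = csum σ v m := by
  rw [csum_add]
  have b1 : ∑ i ∈ range (orderOf σ), v (σ ^ m * σ ^ i, σ) = ∑ s : P, v (σ ^ m * s, σ) :=
    sum_pow_eq hσ (fun s => v (σ ^ m * s, σ))
  have b2 : ∑ s : P, v (σ ^ m * s, σ) = ∑ s : P, v (s, σ) :=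
    Fintype.sum_bijective (σ ^ m * ·) (Group.mulLeft_bijective _) _ _ (fun s => rfl)
  rw [b1, b2]
  have hz : ∑ s : P, v (s, σ) = 0 := hu
  rw [hz, add_zero]

lemma csum_mod (v : P × P → M) (hu : psi σ ρ v = 0) (m : ℕ) :
    csum σ v m = csum σ v (m % orderOf σ) := by
  have key : ∀ (q r : ℕ), csum σ v (r + orderOf σ * q) = csum σ v r := by
    intro q
    induction q with
    | zero => intro r; simp
    | succ q ih => intro r; rw [Nat.mul_succ, ← Nat.add_assoc, csum_step hσ ρ v hu, ih]
  conv_lhs => rw [← Nat.div_add_mod m (orderOf σ), Nat.add_comm]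
  exact key _ _

omit hσ in
lemma twoCocycle_pow (v : P × P → M) (hv : v ∈ twoCocycles (Rep.of ρ)) (g : P) (j : ℕ) :
    v (g, σ ^ j) = ρ g (v (1, 1)) +
      (∑ i ∈ range j, v (g * σ ^ i, σ)) - ρ g (csum σ v j) := by
  induction j with
  | zero =>
      rw [pow_zero, twoCocycles_snd_one ρ v hv g]
      simp [csum]
  | succ j ih =>
      have h := twoCocycles_identity ρ v hv g (σ ^ j) σ
      rw [← pow_succ] at h
      have h2 : v (g, σ ^ (j + 1)) =
          v (g, σ ^ j) + v (g * σ ^ j, σ) - ρ g (v (σ ^ j, σ)) := by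
        have h3 : v (g, σ ^ (j + 1)) -
            (v (g, σ ^ j) + v (g * σ ^ j, σ) - ρ g (v (σ ^ j, σ))) = 0 := by
          rw [show v (g, σ ^ (j + 1)) -
            (v (g, σ ^ j) + v (g * σ ^ j, σ) - ρ g (v (σ ^ j, σ))) =
            ρ g (v (σ ^ j, σ)) - v (g * σ ^ j, σ) + v (g, σ ^ (j + 1))
              - v (g, σ ^ j) from by abel]
          exact h
        exact sub_eq_zero.mp h3
      rw [h2, ih, Finset.sum_range_succ, csum_succ, map_add]
      abel

lemma twoCocycle_coboundary_of_psi_zero (v : P × P → M)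
    (hv : v ∈ twoCocycles (Rep.of ρ)) (hu : psi σ ρ v = 0) :
    ∃ x : P → M, ∀ g h : P, ρ g (x h) - x (g * h) + x g = v (g, h) := by
  refine ⟨fun g => v (1, 1) - csum σ v (expo σ hσ g), fun g h => ?_⟩
  have hgh : v (g, h) = ρ g (v (1, 1)) +
      (∑ i ∈ range (expo σ hσ h), v (g * σ ^ i, σ)) -
      ρ g (csum σ v (expo σ hσ h)) := by
    conv_lhs => rw [← pow_expo hσ h]
    exact twoCocycle_pow ρ v hv g (expo σ hσ h)
  have hS : ∑ i ∈ range (expo σ hσ h), v (g * σ ^ i, σ) =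
      csum σ v (expo σ hσ g + expo σ hσ h) - csum σ v (expo σ hσ g) := by
    rw [csum_add]
    have hterm : ∀ i : ℕ, v (g * σ ^ i, σ) = v (σ ^ expo σ hσ g * σ ^ i, σ) := by
      intro i; rw [pow_expo hσ g]
    rw [Finset.sum_congr rfl (fun i _ => hterm i)]
    abel
  have hper : csum σ v (expo σ hσ g + expo σ hσ h) = csum σ v (expo σ hσ (g * h)) := by
    rw [csum_mod hσ ρ v hu (expo σ hσ g + expo σ hσ h), expo_mul_mod hσ]
  rw [hgh, hS, hper, map_sub]
  beta_reduce
  abel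

lemma psi_surjective_mod {a : M} (ha : tEnd σ ρ a = 0) :
    ∃ v : P × P → M, v ∈ twoCocycles (Rep.of ρ) ∧
      a - psi σ ρ v ∈ LinearMap.range (nEnd ρ) := by
  rcases Nat.lt_or_ge 1 (orderOf σ) with hn | hn
  · refine ⟨_, carry_cocycle hσ ρ ha, ?_⟩
    have he1 : expo σ hσ σ = 1 := by
      have h := expo_pow_lt hσ hn
      rwa [pow_one] at h
    have hpsi : psi σ ρ (fun p : P × P =>
        ((expo σ hσ p.1 + expo σ hσ p.2) / orderOf σ) • a) = a := by
      rw [psi]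
      have hterm : ∀ s : P, ((expo σ hσ s + expo σ hσ σ) / orderOf σ) • a
          = if s = σ ^ (orderOf σ - 1) then a else 0 := by
        intro s
        by_cases hs : s = σ ^ (orderOf σ - 1)
        · subst hs
          rw [expo_pow_lt hσ (by omega), he1, if_pos rfl]
          have hd : (orderOf σ - 1 + 1) / orderOf σ = 1 := by
            rw [Nat.sub_add_cancel (by omega), Nat.div_self (by omega)]
          rw [hd, one_smul]
        · rw [if_neg hs, he1]
          have hlt : expo σ hσ s < orderOf σ := expo_lt hσ s
          have hne : expo σ hσ s ≠ orderOf σ - 1 := by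
            intro hcon
            apply hs
            rw [← pow_expo hσ s, hcon]
          have hd : (expo σ hσ s + 1) / orderOf σ = 0 := Nat.div_eq_of_lt (by omega)
          rw [hd, zero_smul]
      rw [Finset.sum_congr rfl (fun s _ => hterm s), Finset.sum_ite_eq' Finset.univ]
      simp
    rw [hpsi, sub_self]
    exact zero_mem _
  · refine ⟨0, zero_mem _, ⟨a, ?_⟩⟩
    have hcard : Fintype.card P = 1 := by
      have h := orderOf_gen_eq_card hσ
      have h0 : 0 < orderOf σ := orderOf_pos σ
      omega
    have hP : ∀ s : P, s = 1 := fun s =>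
      Fintype.card_le_one_iff.mp (le_of_eq hcard) s 1
    have hN : nEnd ρ a = a := by
      rw [nEnd_apply]
      rw [show (Finset.univ : Finset P) = {1} from Finset.eq_singleton_iff_unique_mem.mpr
        ⟨Finset.mem_univ 1, fun s _ => hP s⟩]
      simp
    have hz : psi σ ρ (0 : P × P → M) = 0 := by simp [psi]
    rw [hz, sub_zero]
    exact hN

end HQ
namespace HQ
open groupCohomology Finset
open scoped Classical

variable {P : Type} [Group P] [Fintype P] {M : Type} [AddCommGroup M]
variable {σ : P} (hσ : ∀ x : P, ∃ i : ℕ, σ ^ i = x) (ρ : Representation ℤ P M)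

lemma psi_coe_sub (u v : twoCocycles (Rep.of ρ)) :
    psi σ ρ ((u - v : twoCocycles (Rep.of ρ)) : P × P → M) =
      psi σ ρ (u : P × P → M) - psi σ ρ (v : P × P → M) := by
  have h : ((u - v : twoCocycles (Rep.of ρ)) : P × P → M)
      = (u : P × P → M) - (v : P × P → M) := rfl
  rw [h, psi_sub]

/-- the homomorphism from 2-cocycles to `ker T` induced by `psi` -/
def psiHom : twoCocycles (Rep.of ρ) →+ (tEnd σ ρ).toAddMonoidHom.ker :=
  AddMonoidHom.mk' (fun u => ⟨psi σ ρ (u : P × P → M), by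
    rw [AddMonoidHom.mem_ker]
    exact psi_mem_ker ρ (u : P × P → M) u.2⟩) (by
    intro u v
    ext
    show psi σ ρ ((u + v : twoCocycles (Rep.of ρ)) : P × P → M) = _
    have h : ((u + v : twoCocycles (Rep.of ρ)) : P × P → M)
        = (u : P × P → M) + (v : P × P → M) := rfl
    rw [h]
    show ∑ s : P, ((u : P × P → M) + (v : P × P → M)) (s, σ) = _
    simp only [Pi.add_apply]
    rw [Finset.sum_add_distrib]
    rfl)

/-- the function from `H²` to the zeroth Tate cohomology -/
def h2toq0 : twoCocycles (Rep.of ρ) ⧸ twoCoboundaries (Rep.of ρ) → q0 σ ρ :=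
  Quotient.lift (fun u : twoCocycles (Rep.of ρ) =>
      (QuotientAddGroup.mk (psiHom (σ := σ) ρ u) : q0 σ ρ)) (by
    intro u v huv
    have hmem : u - v ∈ twoCoboundaries (Rep.of ρ) := by
      have h := (Submodule.quotientRel_def (twoCoboundaries (Rep.of ρ))).mp huv
      exact h
    obtain ⟨c, hc⟩ := mem_range_of_mem_twoCoboundaries (A := Rep.of ρ) hmem
    apply QuotientAddGroup.eq.mpr
    rw [AddSubgroup.mem_addSubgroupOf]
    have hval : ((- psiHom (σ := σ) ρ u + psiHom (σ := σ) ρ v :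
        (tEnd σ ρ).toAddMonoidHom.ker) : M) =
        -(psi σ ρ (u : P × P → M)) + psi σ ρ (v : P × P → M) := rfl
    rw [hval]
    have hpsi : psi σ ρ ((u - v : twoCocycles (Rep.of ρ)) : P × P → M) = nEnd ρ (c σ) := by
      have hdc : ((u - v : twoCocycles (Rep.of ρ)) : P × P → M) = dOne (Rep.of ρ) c :=
        hc.symm
      rw [hdc, psi_dOne]
    rw [psi_coe_sub] at hpsi
    refine ⟨-(c σ), ?_⟩
    show nEnd ρ (-(c σ)) = _
    rw [map_neg, ← hpsi]
    abel)

include hσ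

lemma h2toq0_bijective : Function.Bijective (h2toq0 (σ := σ) ρ) := by
  constructor
  · -- injectivity
    intro x y
    induction x using Quotient.inductionOn with | h u =>
    induction y using Quotient.inductionOn with | h v =>
    intro hxy
    have h1 : -(psi σ ρ (u : P × P → M)) + psi σ ρ (v : P × P → M) ∈
        (nEnd ρ).toAddMonoidHom.range := by
      have h2 := QuotientAddGroup.eq.mp hxy
      rwa [AddSubgroup.mem_addSubgroupOf] at h2
    obtain ⟨y0, hy0⟩ := h1
    set c0 : P → M := fun x => if x = σ then y0 else 0 with hc0
    have hc0σ : c0 σ = y0 := by rw [hc0]; simp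
    set dc : P × P → M := fun p => ρ p.1 (c0 p.2) - c0 (p.1 * p.2) + c0 p.1 with hdcdef
    have hdcmem : dc ∈ twoCocycles (Rep.of ρ) := by
      rw [mem_twoCocycles_def]
      intro g h j
      simp only [hdcdef, repOf_rho_apply, map_sub, map_add, rho_rho, mul_assoc]
      abel
    have hdcpsi : psi σ ρ dc = nEnd ρ (c0 σ) := psi_dOne ρ c0
    set vu : P × P → M := ((v - u : twoCocycles (Rep.of ρ)) : P × P → M) with hvu
    set w : P × P → M := vu - dc with hw
    have hwmem : w ∈ twoCocycles (Rep.of ρ) := sub_mem (v - u).2 hdcmem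
    have hwpsi : psi σ ρ w = 0 := by
      rw [hw, psi_sub, hvu, psi_coe_sub, hdcpsi, hc0σ]
      have hn : (nEnd ρ) y0 = -(psi σ ρ (u : P × P → M)) + psi σ ρ (v : P × P → M) := hy0
      rw [hn]
      abel
    obtain ⟨xw, hxw⟩ := twoCocycle_coboundary_of_psi_zero hσ ρ w hwmem hwpsi
    have hvumem : v - u ∈ twoCoboundaries (Rep.of ρ) := by
      rw [mem_twoCoboundaries_iff]
      refine ⟨fun g => xw g + c0 g, fun g h => ?_⟩
      show ρ g (xw h + c0 h) - (xw (g * h) + c0 (g * h)) + (xw g + c0 g) = vu (g, h)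
      have hsum : vu (g, h) = w (g, h) + dc (g, h) := by
        rw [hw]
        show vu (g, h) = vu (g, h) - dc (g, h) + dc (g, h)
        abel
      rw [map_add, hsum, ← hxw g h, hdcdef]
      show ρ g (xw h) + ρ g (c0 h) - (xw (g * h) + c0 (g * h)) + (xw g + c0 g) =
        ρ g (xw h) - xw (g * h) + xw g + (ρ g (c0 h) - c0 (g * h) + c0 g)
      abel
    apply (Submodule.Quotient.eq (twoCoboundaries (Rep.of ρ))).mpr
    have hneg : u - v = -(v - u) := by abel
    rw [hneg]
    exact neg_mem hvumem
  · -- surjectivity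
    intro x
    induction x using Quotient.inductionOn with | h a =>
    have ha : tEnd σ ρ (a : M) = 0 := a.2
    obtain ⟨v, hv, w0, hw0⟩ := psi_surjective_mod hσ ρ ha
    refine ⟨Submodule.Quotient.mk ⟨v, hv⟩, ?_⟩
    show (QuotientAddGroup.mk (psiHom (σ := σ) ρ ⟨v, hv⟩) : q0 σ ρ) = _
    apply QuotientAddGroup.eq.mpr
    rw [AddSubgroup.mem_addSubgroupOf]
    refine ⟨w0, ?_⟩
    show nEnd ρ w0 = _
    have hval : ((-(psiHom (σ := σ) ρ ⟨v, hv⟩) + a :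
        (tEnd σ ρ).toAddMonoidHom.ker) : M) = -(psi σ ρ v) + (a : M) := rfl
    rw [hval]
    have hn : nEnd ρ w0 = (a : M) - psi σ ρ v := hw0
    rw [hn]
    abel

lemma H2_equiv_q0 : Nonempty (groupCohomology (Rep.of ρ) 2 ≃ q0 σ ρ) := by
  have e2 : twoCocycles (Rep.of ρ) ⧸ twoCoboundaries (Rep.of ρ) ≃ q0 σ ρ := Equiv.ofBijective _ (h2toq0_bijective hσ ρ)
  exact ⟨(quotEquivH2 (Rep.of ρ)).symm.trans e2⟩

lemma card_H2_eq : Nat.card (groupCohomology (Rep.of ρ) 2) = Nat.card (q0 σ ρ) :=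
  Nat.card_congr (H2_equiv_q0 hσ ρ).some

end HQ
namespace HQ
open scoped Classical

section generic
variable {M : Type} [AddCommGroup M]

/-- generic "Tate quotient" `ker U / im V` -/
def tq (U V : M →ₗ[ℤ] M) : Type :=
  U.toAddMonoidHom.ker ⧸ (V.toAddMonoidHom.range.addSubgroupOf U.toAddMonoidHom.ker)

instance (U V : M →ₗ[ℤ] M) : AddCommGroup (tq U V) :=
  inferInstanceAs (AddCommGroup (_ ⧸ _))

/-- the quotient map onto a Tate quotient -/
def tqMk (U V : M →ₗ[ℤ] M) (x : U.toAddMonoidHom.ker) : tq U V := QuotientAddGroup.mk x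

lemma tqMk_surjective (U V : M →ₗ[ℤ] M) : Function.Surjective (tqMk U V) :=
  fun x => Quotient.inductionOn x (fun a => ⟨a, rfl⟩)

lemma tqMk_eq_iff (U V : M →ₗ[ℤ] M) (x y : U.toAddMonoidHom.ker) :
    tqMk U V x = tqMk U V y ↔ ∃ a : M, V a = -(x : M) + y := by
  show (QuotientAddGroup.mk x : U.toAddMonoidHom.ker ⧸
    (V.toAddMonoidHom.range.addSubgroupOf U.toAddMonoidHom.ker)) = QuotientAddGroup.mk y ↔ _
  rw [QuotientAddGroup.eq, AddSubgroup.mem_addSubgroupOf]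
  constructor
  · rintro ⟨a, ha⟩; exact ⟨a, ha⟩
  · rintro ⟨a, ha⟩; exact ⟨a, ha⟩

lemma tqMk_eq_zero_iff (U V : M →ₗ[ℤ] M) (x : U.toAddMonoidHom.ker) :
    tqMk U V x = 0 ↔ ∃ a : M, V a = (x : M) := by
  have h : (0 : tq U V) = tqMk U V 0 := rfl
  rw [h, eq_comm, tqMk_eq_iff]
  simp

lemma tqMk_add (U V : M →ₗ[ℤ] M) (x y : U.toAddMonoidHom.ker) :
    tqMk U V (x + y) = tqMk U V x + tqMk U V y := rfl

end generic

section genmap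
variable {M₁ M₂ : Type} [AddCommGroup M₁] [AddCommGroup M₂]
variable (U₁ V₁ : M₁ →ₗ[ℤ] M₁) (U₂ V₂ : M₂ →ₗ[ℤ] M₂) (φ : M₁ →ₗ[ℤ] M₂)
variable (hU : ∀ x, φ (U₁ x) = U₂ (φ x)) (hV : ∀ x, φ (V₁ x) = V₂ (φ x))

/-- restriction of an equivariant map to kernels -/
def kerRes (hU : ∀ x, φ (U₁ x) = U₂ (φ x)) :
    U₁.toAddMonoidHom.ker →+ U₂.toAddMonoidHom.ker :=
  AddMonoidHom.mk' (fun x => ⟨φ x, by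
    have hx : U₁ (x : M₁) = 0 := x.2
    have h2 : U₂ (φ (x : M₁)) = 0 := by rw [← hU, hx, map_zero]
    exact h2⟩) (fun a b => Subtype.ext (map_add φ _ _))

include hU hV in
lemma tq_le : V₁.toAddMonoidHom.range.addSubgroupOf U₁.toAddMonoidHom.ker ≤
    (V₂.toAddMonoidHom.range.addSubgroupOf U₂.toAddMonoidHom.ker).comap
      (kerRes U₁ U₂ φ hU) := by
  rintro x hx
  rw [AddSubgroup.mem_addSubgroupOf] at hx
  obtain ⟨a, ha⟩ := hx
  rw [AddSubgroup.mem_comap, AddSubgroup.mem_addSubgroupOf]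
  refine ⟨φ a, ?_⟩
  show V₂ (φ a) = φ (x : M₁)
  rw [← hV]
  have h3 : V₁ a = (x : M₁) := ha
  rw [h3]

/-- the induced map on Tate quotients -/
def tqMap : tq U₁ V₁ →+ tq U₂ V₂ :=
  QuotientAddGroup.map _ _ (kerRes U₁ U₂ φ hU) (tq_le U₁ V₁ U₂ V₂ φ hU hV)

lemma tqMap_mk (x : U₁.toAddMonoidHom.ker) :
    tqMap U₁ V₁ U₂ V₂ φ hU hV (tqMk U₁ V₁ x) = tqMk U₂ V₂ (kerRes U₁ U₂ φ hU x) := rfl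

end genmap
end HQ
namespace HQ
open scoped Classical

section hexagon
variable {A B C : Type} [AddCommGroup A] [AddCommGroup B] [AddCommGroup C]
variable (UA VA : A →ₗ[ℤ] A) (UB VB : B →ₗ[ℤ] B) (UC VC : C →ₗ[ℤ] C)
variable (f : A →ₗ[ℤ] B) (g : B →ₗ[ℤ] C)
variable (hfU : ∀ x, f (UA x) = UB (f x)) (hfV : ∀ x, f (VA x) = VB (f x))
variable (hgU : ∀ x, g (UB x) = UC (g x)) (hgV : ∀ x, g (VB x) = VC (g x))
variable (hUVB : ∀ x, UB (VB x) = 0) (hVUB : ∀ x, VB (UB x) = 0)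
variable (hinj : Function.Injective f) (hsurj : Function.Surjective g)
variable (hex : ∀ b : B, g b = 0 ↔ ∃ a : A, f a = b)

/-- an `A`-side representative for the connecting map -/
noncomputable def dlt0 (hgU : ∀ x, g (UB x) = UC (g x)) (hsurj : Function.Surjective g)
    (hex : ∀ b : B, g b = 0 ↔ ∃ a : A, f a = b) (c : UC.toAddMonoidHom.ker) : A :=
  Classical.choose ((hex (UB (Function.surjInv hsurj (c : C)))).mp (by
    rw [hgU, Function.surjInv_eq hsurj]
    exact c.2))

lemma f_dlt0 (c : UC.toAddMonoidHom.ker) :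
    f (dlt0 UB UC f g hgU hsurj hex c) = UB (Function.surjInv hsurj (c : C)) :=
  Classical.choose_spec ((hex (UB (Function.surjInv hsurj (c : C)))).mp (by
    rw [hgU, Function.surjInv_eq hsurj]
    exact c.2))

include hfU hinj in
lemma dlt0_diff (c : UC.toAddMonoidHom.ker) (b : B) (hb : g b = (c : C)) (a : A)
    (ha : f a = UB b) : ∃ a₁ : A, UA a₁ = dlt0 UB UC f g hgU hsurj hex c - a := by
  have h0 : g (Function.surjInv hsurj (c : C) - b) = 0 := by
    rw [map_sub, Function.surjInv_eq hsurj, hb, sub_self]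
  obtain ⟨a₁, ha₁⟩ := (hex _).mp h0
  refine ⟨a₁, hinj ?_⟩
  rw [hfU, ha₁, map_sub, map_sub, f_dlt0 UB UC f g hgU hsurj hex c, ha]

include hfV hVUB hinj in
lemma VA_dlt0 (c : UC.toAddMonoidHom.ker) : VA (dlt0 UB UC f g hgU hsurj hex c) = 0 := by
  apply hinj
  rw [hfV, f_dlt0 UB UC f g hgU hsurj hex c, hVUB, map_zero]

/-- the connecting homomorphism on kernel level -/
noncomputable def dltKer : UC.toAddMonoidHom.ker →+ tq VA UA :=
  AddMonoidHom.mk' (fun c => tqMk VA UA ⟨dlt0 UB UC f g hgU hsurj hex c,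
    by exact VA_dlt0 VA UB VB UC f g hfV hgU hVUB hinj hsurj hex c⟩) (by
    intro c₁ c₂
    rw [← tqMk_add, tqMk_eq_iff]
    obtain ⟨a₁, ha₁⟩ := dlt0_diff UA UB UC f g hfU hgU hinj hsurj hex (c₁ + c₂)
      (Function.surjInv hsurj (c₁ : C) + Function.surjInv hsurj (c₂ : C))
      (by rw [map_add, Function.surjInv_eq hsurj, Function.surjInv_eq hsurj]; rfl)
      (dlt0 UB UC f g hgU hsurj hex c₁ + dlt0 UB UC f g hgU hsurj hex c₂)
      (by rw [map_add, map_add, f_dlt0 UB UC f g hgU hsurj hex c₁,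
        f_dlt0 UB UC f g hgU hsurj hex c₂])
    refine ⟨-a₁, ?_⟩
    rw [map_neg, ha₁]
    push_cast
    abel)

/-- the connecting homomorphism between Tate quotients -/
noncomputable def dlt : tq UC VC →+ tq VA UA :=
  QuotientAddGroup.lift _
    (dltKer UA VA UB VB UC f g hfU hfV hgU hVUB hinj hsurj hex) (by
    intro x hx
    rw [AddSubgroup.mem_addSubgroupOf] at hx
    obtain ⟨c', hc'⟩ := hx
    show tqMk VA UA _ = 0
    rw [tqMk_eq_zero_iff]
    obtain ⟨b', hb'⟩ := hsurj c'
    obtain ⟨a₁, ha₁⟩ := dlt0_diff UA UB UC f g hfU hgU hinj hsurj hex x (VB b')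
      (by rw [hgV, hb']; exact hc') 0
      (by rw [map_zero, hUVB])
    refine ⟨a₁, ?_⟩
    rw [ha₁, sub_zero])

lemma dlt_mk (c : UC.toAddMonoidHom.ker) :
    dlt UA VA UB VB UC VC f g hfU hfV hgU hgV hUVB hVUB hinj hsurj hex (tqMk UC VC c) =
      tqMk VA UA ⟨dlt0 UB UC f g hgU hsurj hex c,
        VA_dlt0 VA UB VB UC f g hfV hgU hVUB hinj hsurj hex c⟩ := rfl

end hexagon
end HQ
namespace HQ
open scoped Classical

section hexagon2
variable {A B C : Type} [AddCommGroup A] [AddCommGroup B] [AddCommGroup C]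
variable (UA VA : A →ₗ[ℤ] A) (UB VB : B →ₗ[ℤ] B) (UC VC : C →ₗ[ℤ] C)
variable (f : A →ₗ[ℤ] B) (g : B →ₗ[ℤ] C)
variable (hfU : ∀ x, f (UA x) = UB (f x)) (hfV : ∀ x, f (VA x) = VB (f x))
variable (hgU : ∀ x, g (UB x) = UC (g x)) (hgV : ∀ x, g (VB x) = VC (g x))
variable (hUVB : ∀ x, UB (VB x) = 0) (hVUB : ∀ x, VB (UB x) = 0)
variable (hinj : Function.Injective f) (hsurj : Function.Surjective g)
variable (hex : ∀ b : B, g b = 0 ↔ ∃ a : A, f a = b)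

include hUVB hinj hsurj hex in
lemma hexagon_exact_B :
    (tqMap UA VA UB VB f hfU hfV).range = (tqMap UB VB UC VC g hgU hgV).ker := by
  ext x
  constructor
  · rintro ⟨y, rfl⟩
    obtain ⟨a, rfl⟩ := tqMk_surjective UA VA y
    rw [AddMonoidHom.mem_ker, tqMap_mk, tqMap_mk, tqMk_eq_zero_iff]
    refine ⟨0, ?_⟩
    have hgf : g (f (a : A)) = 0 := (hex (f (a : A))).mpr ⟨a, rfl⟩
    show VC 0 = g (f (a : A))
    rw [map_zero, hgf]
  · intro hx
    obtain ⟨b, rfl⟩ := tqMk_surjective UB VB x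
    rw [AddMonoidHom.mem_ker, tqMap_mk, tqMk_eq_zero_iff] at hx
    obtain ⟨c', hc'⟩ := hx
    obtain ⟨b', hb'⟩ := hsurj c'
    have h0 : g ((b : B) - VB b') = 0 := by
      rw [map_sub, hgV, hb', hc']
      show g (b : B) - g (b : B) = 0
      rw [sub_self]
    obtain ⟨a, ha⟩ := (hex _).mp h0
    have hUAa : UA a = 0 := by
      apply hinj
      rw [hfU, ha, map_sub, map_zero, hUVB]
      have hUBb : UB (b : B) = 0 := b.2
      rw [hUBb, sub_zero]
    refine ⟨tqMk UA VA ⟨a, hUAa⟩, ?_⟩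
    rw [tqMap_mk, tqMk_eq_iff]
    refine ⟨b', ?_⟩
    show VB b' = -(f a) + (b : B)
    rw [ha]
    abel

include hfU hfV hUVB hVUB hinj hsurj hex in
lemma hexagon_exact_C :
    (tqMap UB VB UC VC g hgU hgV).range =
      (dlt UA VA UB VB UC VC f g hfU hfV hgU hgV hUVB hVUB hinj hsurj hex).ker := by
  ext x
  constructor
  · rintro ⟨y, rfl⟩
    obtain ⟨b, rfl⟩ := tqMk_surjective UB VB y
    rw [AddMonoidHom.mem_ker, tqMap_mk, dlt_mk, tqMk_eq_zero_iff]
    obtain ⟨a₁, ha₁⟩ := dlt0_diff UA UB UC f g hfU hgU hinj hsurj hex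
      (kerRes UB UC g hgU b) (b : B) rfl 0
      (by rw [map_zero]; exact (b.2 : UB (b : B) = 0).symm)
    refine ⟨a₁, ?_⟩
    rw [ha₁, sub_zero]
  · intro hx
    obtain ⟨c, rfl⟩ := tqMk_surjective UC VC x
    rw [AddMonoidHom.mem_ker, dlt_mk, tqMk_eq_zero_iff] at hx
    obtain ⟨a, ha⟩ := hx
    set b : B := Function.surjInv hsurj (c : C) - f a with hbdef
    have hgb : g b = (c : C) := by
      rw [hbdef, map_sub, Function.surjInv_eq hsurj,
        (hex (f a)).mpr ⟨a, rfl⟩, sub_zero]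
    have hUBb : UB b = 0 := by
      rw [hbdef, map_sub, ← f_dlt0 UB UC f g hgU hsurj hex c, ← hfU, ha,
        ← map_sub, sub_self, map_zero]
    refine ⟨tqMk UB VB ⟨b, hUBb⟩, ?_⟩
    rw [tqMap_mk, tqMk_eq_iff]
    refine ⟨0, ?_⟩
    show VC 0 = -(g b) + (c : C)
    rw [map_zero, hgb, neg_add_cancel]

include hgV hUVB hVUB hsurj in
lemma hexagon_exact_A :
    (dlt UA VA UB VB UC VC f g hfU hfV hgU hgV hUVB hVUB hinj hsurj hex).range =
      (tqMap VA UA VB UB f hfV hfU).ker := by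
  ext x
  constructor
  · rintro ⟨y, rfl⟩
    obtain ⟨c, rfl⟩ := tqMk_surjective UC VC y
    rw [AddMonoidHom.mem_ker, dlt_mk, tqMap_mk, tqMk_eq_zero_iff]
    refine ⟨Function.surjInv hsurj (c : C), ?_⟩
    exact (f_dlt0 UB UC f g hgU hsurj hex c).symm
  · intro hx
    obtain ⟨a, rfl⟩ := tqMk_surjective VA UA x
    rw [AddMonoidHom.mem_ker, tqMap_mk, tqMk_eq_zero_iff] at hx
    obtain ⟨b, hb⟩ := hx
    have hUCgb : UC (g b) = 0 := by
      rw [← hgU, hb]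
      show g (f (a : A)) = 0
      exact (hex (f (a : A))).mpr ⟨a, rfl⟩
    refine ⟨tqMk UC VC ⟨g b, hUCgb⟩, ?_⟩
    rw [dlt_mk, tqMk_eq_iff]
    obtain ⟨a₁, ha₁⟩ := dlt0_diff UA UB UC f g hfU hgU hinj hsurj hex
      ⟨g b, hUCgb⟩ b rfl (a : A) hb.symm
    refine ⟨-a₁, ?_⟩
    rw [map_neg, ha₁]
    abel

end hexagon2
end HQ
namespace HQ

section counting
variable {X Y Z : Type} [AddCommGroup X] [AddCommGroup Y] [AddCommGroup Z]

lemma finite_range_of_finite (φ : X →+ Y) [Finite X] : Finite φ.range := by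
  have h : (Set.range ⇑φ).Finite := Set.finite_range ⇑φ
  have h2 : ((φ.range : AddSubgroup Y) : Set Y) = Set.range ⇑φ := AddMonoidHom.coe_range φ
  rw [show ((φ.range : AddSubgroup Y) : Type) = ((Set.range ⇑φ) : Set Y).Elem from
    congrArg Set.Elem h2]
  exact h.to_subtype

lemma card_eq_card_ker_mul_card_range (φ : X →+ Y) :
    Nat.card X = Nat.card φ.ker * Nat.card φ.range := by
  rw [AddSubgroup.card_eq_card_quotient_mul_card_addSubgroup φ.ker, Nat.mul_comm]
  congr 1
  exact Nat.card_congr (QuotientAddGroup.quotientKerEquivRange φ).toEquiv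

lemma finite_of_exact (φ : X →+ Y) (ψ : Y →+ Z) (h : φ.range = ψ.ker)
    [Finite X] [Finite Z] : Finite Y := by
  have h1 : Finite ψ.ker := by
    rw [← h]
    exact finite_range_of_finite φ
  have h2 : Finite ψ.range := Subtype.finite
  have h3 : Finite (Y ⧸ ψ.ker) :=
    Finite.of_equiv _ (QuotientAddGroup.quotientKerEquivRange ψ).toEquiv.symm
  exact Finite.of_equiv _ (AddSubgroup.addGroupEquivQuotientProdAddSubgroup (s := ψ.ker)).symm

end counting
end HQ


/-- The Herbrand quotient `|H^2(P,M)| / |H^1(P,M)|` of a representation. -/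
noncomputable def herbrand {k P V : Type} [CommRing k] [Group P]
    [AddCommGroup V] [Module k V] (ρ : Representation k P V) : ℚ :=
  (Nat.card (groupCohomology (Rep.of ρ) 2) : ℚ) /
    (Nat.card (groupCohomology (Rep.of ρ) 1) : ℚ)

open HQ

/-- multiplicativity of the Herbrand quotient in short exact sequences of
modules over a finite cyclic group `P`. -/
theorem statement5 (P : Type) [Group P] [Finite P] [IsCyclic P]
    (A B C : Type) [AddCommGroup A] [AddCommGroup B] [AddCommGroup C]
    (ρA : Representation ℤ P A) (ρB : Representation ℤ P B) (ρC : Representation ℤ P C)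
    (f : A →ₗ[ℤ] B) (g : B →ₗ[ℤ] C)
    (hf : ∀ (s : P) (x : A), f (ρA s x) = ρB s (f x))
    (hg : ∀ (s : P) (x : B), g (ρB s x) = ρC s (g x))
    (hinj : Function.Injective f) (hsurj : Function.Surjective g)
    (hexact : LinearMap.range f = LinearMap.ker g)
    (hA1 : Finite (groupCohomology (Rep.of ρA) 1))
    (hA2 : Finite (groupCohomology (Rep.of ρA) 2))
    (hC1 : Finite (groupCohomology (Rep.of ρC) 1))
    (hC2 : Finite (groupCohomology (Rep.of ρC) 2)) :
    Finite (groupCohomology (Rep.of ρB) 1) ∧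
    Finite (groupCohomology (Rep.of ρB) 2) ∧
    herbrand ρB = herbrand ρA * herbrand ρC := by
  haveI := hA1; haveI := hA2; haveI := hC1; haveI := hC2
  cases nonempty_fintype P
  obtain ⟨σ, hgen⟩ := IsCyclic.exists_generator (α := P)
  have hσ : ∀ x : P, ∃ i : ℕ, σ ^ i = x := by
    intro x
    have h1 : x ∈ Submonoid.powers σ := mem_powers_iff_mem_zpowers.mpr (hgen x)
    obtain ⟨i, hi⟩ := h1
    exact ⟨i, hi⟩
  have hfT : ∀ x, f (tEnd σ ρA x) = tEnd σ ρB (f x) := fun x => by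
    rw [tEnd_apply, tEnd_apply, map_sub, hf]
  have hfN : ∀ x, f (nEnd ρA x) = nEnd ρB (f x) := fun x => by
    rw [nEnd_apply, nEnd_apply, map_sum]
    exact Finset.sum_congr rfl fun s _ => hf s x
  have hgT : ∀ x, g (tEnd σ ρB x) = tEnd σ ρC (g x) := fun x => by
    rw [tEnd_apply, tEnd_apply, map_sub, hg]
  have hgN : ∀ x, g (nEnd ρB x) = nEnd ρC (g x) := fun x => by
    rw [nEnd_apply, nEnd_apply, map_sum]
    exact Finset.sum_congr rfl fun s _ => hg s x
  have hex : ∀ b : B, g b = 0 ↔ ∃ a : A, f a = b := by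
    intro b
    constructor
    · intro h
      have hb : b ∈ LinearMap.range f := by rw [hexact]; exact LinearMap.mem_ker.mpr h
      exact hb
    · rintro ⟨a, rfl⟩
      have hb : f a ∈ LinearMap.ker g := by rw [← hexact]; exact ⟨a, rfl⟩
      exact hb
  set m1 := tqMap (tEnd σ ρA) (nEnd ρA) (tEnd σ ρB) (nEnd ρB) f hfT hfN with hm1
  set m2 := tqMap (tEnd σ ρB) (nEnd ρB) (tEnd σ ρC) (nEnd ρC) g hgT hgN with hm2
  set m3 := dlt (tEnd σ ρA) (nEnd ρA) (tEnd σ ρB) (nEnd ρB) (tEnd σ ρC) (nEnd ρC) f g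
    hfT hfN hgT hgN (tEnd_nEnd ρB) (nEnd_tEnd ρB) hinj hsurj hex with hm3
  set m4 := tqMap (nEnd ρA) (tEnd σ ρA) (nEnd ρB) (tEnd σ ρB) f hfN hfT with hm4
  set m5 := tqMap (nEnd ρB) (tEnd σ ρB) (nEnd ρC) (tEnd σ ρC) g hgN hgT with hm5
  set m6 := dlt (nEnd ρA) (tEnd σ ρA) (nEnd ρB) (tEnd σ ρB) (nEnd ρC) (tEnd σ ρC) f g
    hfN hfT hgN hgT (nEnd_tEnd ρB) (tEnd_nEnd ρB) hinj hsurj hex with hm6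
  have e2 : m1.range = m2.ker := hexagon_exact_B _ _ _ _ _ _ f g hfT hfN hgT hgN
    (tEnd_nEnd ρB) hinj hsurj hex
  have e3 : m2.range = m3.ker := hexagon_exact_C _ _ _ _ _ _ f g hfT hfN hgT hgN
    (tEnd_nEnd ρB) (nEnd_tEnd ρB) hinj hsurj hex
  have e4 : m3.range = m4.ker := hexagon_exact_A _ _ _ _ _ _ f g hfT hfN hgT hgN
    (tEnd_nEnd ρB) (nEnd_tEnd ρB) hinj hsurj hex
  have e5 : m4.range = m5.ker := hexagon_exact_B _ _ _ _ _ _ f g hfN hfT hgN hgT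
    (nEnd_tEnd ρB) hinj hsurj hex
  have e6 : m5.range = m6.ker := hexagon_exact_C _ _ _ _ _ _ f g hfN hfT hgN hgT
    (nEnd_tEnd ρB) (tEnd_nEnd ρB) hinj hsurj hex
  have e1 : m6.range = m1.ker := hexagon_exact_A _ _ _ _ _ _ f g hfN hfT hgN hgT
    (nEnd_tEnd ρB) (tEnd_nEnd ρB) hinj hsurj hex
  haveI fX1 : Finite (tq (tEnd σ ρA) (nEnd ρA)) := Finite.of_equiv _ (H2_equiv_q0 hσ ρA).some
  haveI fX3 : Finite (tq (tEnd σ ρC) (nEnd ρC)) := Finite.of_equiv _ (H2_equiv_q0 hσ ρC).some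
  haveI fX4 : Finite (tq (nEnd ρA) (tEnd σ ρA)) := Finite.of_equiv _ (H1_equiv_q1 hσ ρA).some
  haveI fX6 : Finite (tq (nEnd ρC) (tEnd σ ρC)) := Finite.of_equiv _ (H1_equiv_q1 hσ ρC).some
  haveI fX2 : Finite (tq (tEnd σ ρB) (nEnd ρB)) := finite_of_exact m1 m2 e2
  haveI fX5 : Finite (tq (nEnd ρB) (tEnd σ ρB)) := finite_of_exact m4 m5 e5
  set k1 := Nat.card m1.range with hk1def
  set k2 := Nat.card m2.range with hk2def
  set k3 := Nat.card m3.range with hk3def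
  set k4 := Nat.card m4.range with hk4def
  set k5 := Nat.card m5.range with hk5def
  set k6 := Nat.card m6.range with hk6def
  have hc1 : Nat.card (tq (tEnd σ ρA) (nEnd ρA)) = k6 * k1 := by
    rw [card_eq_card_ker_mul_card_range m1, ← e1]
  have hc2 : Nat.card (tq (tEnd σ ρB) (nEnd ρB)) = k1 * k2 := by
    rw [card_eq_card_ker_mul_card_range m2, ← e2]
  have hc3 : Nat.card (tq (tEnd σ ρC) (nEnd ρC)) = k2 * k3 := by
    rw [card_eq_card_ker_mul_card_range m3, ← e3]
  have hc4 : Nat.card (tq (nEnd ρA) (tEnd σ ρA)) = k3 * k4 := by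
    rw [card_eq_card_ker_mul_card_range m4, ← e4]
  have hc5 : Nat.card (tq (nEnd ρB) (tEnd σ ρB)) = k4 * k5 := by
    rw [card_eq_card_ker_mul_card_range m5, ← e5]
  have hc6 : Nat.card (tq (nEnd ρC) (tEnd σ ρC)) = k5 * k6 := by
    rw [card_eq_card_ker_mul_card_range m6, ← e6]
  have h12 : 0 < k1 * k2 := by rw [← hc2]; exact Nat.card_pos
  have h34 : 0 < k3 * k4 := by rw [← hc4]; exact Nat.card_pos
  have h56 : 0 < k5 * k6 := by rw [← hc6]; exact Nat.card_pos
  have h45 : 0 < k4 * k5 := by rw [← hc5]; exact Nat.card_pos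
  have hq3 : (k3 : ℚ) ≠ 0 := by
    have h : k3 ≠ 0 := by intro h0; rw [h0] at h34; omega
    exact_mod_cast h
  have hq4 : (k4 : ℚ) ≠ 0 := by
    have h : k4 ≠ 0 := by intro h0; rw [h0] at h45; omega
    exact_mod_cast h
  have hq5 : (k5 : ℚ) ≠ 0 := by
    have h : k5 ≠ 0 := by intro h0; rw [h0] at h56; omega
    exact_mod_cast h
  have hq6 : (k6 : ℚ) ≠ 0 := by
    have h : k6 ≠ 0 := by intro h0; rw [h0] at h56; omega
    exact_mod_cast h
  have hB1card : Nat.card (groupCohomology (Rep.of ρB) 1) = k4 * k5 := by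
    rw [card_H1_eq hσ ρB]; exact hc5
  have hB2card : Nat.card (groupCohomology (Rep.of ρB) 2) = k1 * k2 := by
    rw [card_H2_eq hσ ρB]; exact hc2
  have hA1card : Nat.card (groupCohomology (Rep.of ρA) 1) = k3 * k4 := by
    rw [card_H1_eq hσ ρA]; exact hc4
  have hA2card : Nat.card (groupCohomology (Rep.of ρA) 2) = k6 * k1 := by
    rw [card_H2_eq hσ ρA]; exact hc1
  have hC1card : Nat.card (groupCohomology (Rep.of ρC) 1) = k5 * k6 := by
    rw [card_H1_eq hσ ρC]; exact hc6
  have hC2card : Nat.card (groupCohomology (Rep.of ρC) 2) = k2 * k3 := by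
    rw [card_H2_eq hσ ρC]; exact hc3
  refine ⟨?_, ?_, ?_⟩
  · haveI hq : Finite (q1 σ ρB) := fX5
    exact Finite.of_equiv _ (H1_equiv_q1 hσ ρB).some.symm
  · haveI hq : Finite (q0 σ ρB) := fX2
    exact Finite.of_equiv _ (H2_equiv_q0 hσ ρB).some.symm
  · unfold herbrand
    rw [hB1card, hB2card, hA1card, hA2card, hC1card, hC2card]
    push_cast
    field_simp
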